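/- For every n ≥ 5, every simplicial complex H on n vertices with e(H) > (n^{5/2} + 3n²)/2 contains five vertices that together span at least 17 edges of H; equivalently, ex(n, 𝓕(5,2)) ≤ (n^{5/2} + 3n²)/2 for every n ≥ 5. -/

import Mathlib

open Finset

/-- `E` is the edge set of a simplicial complex: it is closed under taking subsets. -/
def IsComplex {α : Type*} [DecidableEq α] (E : Finset (Finset α)) : Prop :=
  ∀ e ∈ E, ∀ f ⊆ e, f ∈ E

/-- `H` contains a copy of `F`: an injection of the vertices mapping edges to edges. -/
def HasCopy {α β : Type*} [DecidableEq β]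
    (F : Finset (Finset α)) (H : Finset (Finset β)) : Prop :=
  ∃ f : α → β, Function.Injective f ∧ ∀ e ∈ F, e.image f ∈ H

/-- downward closure of a family of sets -/
def dClosure {α : Type*} [DecidableEq α] (S : Finset (Finset α)) : Finset (Finset α) :=
  S.biUnion Finset.powerset

/-- `ex(n,F)`: the extremal number for simplicial complexes -/
noncomputable def exSC {α : Type*} (n : ℕ) (F : Finset (Finset α)) : ℕ :=
  sSup {m | ∃ E : Finset (Finset (Fin n)), IsComplex E ∧ ¬ HasCopy F E ∧ E.card = m}

/-- `ex^(k)(n,F)`: the extremal number for `k`-uniform hypergraphs -/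
noncomputable def exUnif {α : Type*} (k n : ℕ) (F : Finset (Finset α)) : ℕ :=
  sSup {m | ∃ E : Finset (Finset (Fin n)),
    (∀ e ∈ E, e.card = k) ∧ ¬ HasCopy F E ∧ E.card = m}

/-- `ex(n, 𝓕(5,2))`: the extremal number for the family of all simplicial complexes
on 5 vertices with exactly 17 edges -/
noncomputable def exF52 (n : ℕ) : ℕ :=
  sSup {m | ∃ E : Finset (Finset (Fin n)), IsComplex E ∧
    (∀ S : Finset (Finset (Fin 5)), IsComplex S → S.card = 17 → ¬ HasCopy S E) ∧
    E.card = m}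

set_option linter.unreachableTactic false
set_option linter.unusedTactic false
set_option maxHeartbeats 1000000

/-- link of an ordered pair -/
def plink {n : ℕ} (E : Finset (Finset (Fin n))) (p : Fin n × Fin n) : Finset (Fin n) :=
  univ.filter (fun w => p.1 ≠ p.2 ∧ w ≠ p.1 ∧ w ≠ p.2 ∧ ({p.1, p.2, w} : Finset (Fin n)) ∈ E)

lemma mem_plink {n : ℕ} {E : Finset (Finset (Fin n))} {p : Fin n × Fin n} {w : Fin n} :
    w ∈ plink E p ↔ p.1 ≠ p.2 ∧ w ≠ p.1 ∧ w ≠ p.2 ∧ ({p.1, p.2, w} : Finset (Fin n)) ∈ E := by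
  simp [plink]

lemma eighteen {n : ℕ} (E : Finset (Finset (Fin n))) (hE : IsComplex E)
    (v x x' y z : Fin n)
    (hvx : v ≠ x) (hvx' : v ≠ x') (hvy : v ≠ y) (hvz : v ≠ z)
    (hxx' : x ≠ x') (hxy : x ≠ y) (hxz : x ≠ z)
    (hx'y : x' ≠ y) (hx'z : x' ≠ z) (hyz : y ≠ z)
    (h1 : ({v,x,y} : Finset (Fin n)) ∈ E) (h2 : ({v,x,z} : Finset (Fin n)) ∈ E)
    (h3 : ({v,x',y} : Finset (Fin n)) ∈ E) (h4 : ({v,x',z} : Finset (Fin n)) ∈ E) :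
    ∃ S : Finset (Fin n), S.card = 5 ∧ 17 ≤ (E.filter (fun e => e ⊆ S)).card := by
  classical
  set φ : Fin 5 → Fin n := ![v, x, x', y, z] with hφdef
  have hφ : Function.Injective φ := by
    intro a b hab
    rw [hφdef] at hab
    fin_cases a <;> fin_cases b <;>
      simp only [Matrix.cons_val_zero, Matrix.cons_val_one, Matrix.head_cons,
        Matrix.cons_val_two, Matrix.tail_cons, Matrix.cons_val_three,
        Matrix.cons_val_four, Matrix.cons_val_fin_one, Fin.isValue] at hab <;>
      first | rfl | (exact absurd hab (by tauto)) | (exact absurd hab.symm (by tauto))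
  refine ⟨Finset.image φ univ, ?_, ?_⟩
  · rw [Finset.card_image_of_injective _ hφ]; simp
  · set Y : Finset (Finset (Fin 5)) :=
      ({0,1,3} : Finset (Fin 5)).powerset ∪ ({0,1,4} : Finset (Fin 5)).powerset ∪
      ({0,2,3} : Finset (Fin 5)).powerset ∪ ({0,2,4} : Finset (Fin 5)).powerset with hYdef
    have hYcard : Y.card = 18 := by decide
    have hsub : Y.image (Finset.image φ) ⊆ E.filter (fun e => e ⊆ Finset.image φ univ) := by
      intro t ht
      rw [Finset.mem_image] at ht
      obtain ⟨u, hu, rfl⟩ := ht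
      rw [Finset.mem_filter]
      constructor
      · simp only [hYdef, Finset.mem_union, Finset.mem_powerset] at hu
        have himg : ∀ (w : Finset (Fin 5)), u ⊆ w → Finset.image φ w ∈ E →
            Finset.image φ u ∈ E := fun w hw hwE =>
          hE _ hwE _ (Finset.image_subset_image hw)
        rcases hu with ((hu | hu) | hu) | hu
        · exact himg _ hu (by simpa [hφdef] using h1)
        · exact himg _ hu (by simpa [hφdef] using h2)
        · exact himg _ hu (by simpa [hφdef] using h3)
        · exact himg _ hu (by simpa [hφdef] using h4)
      · exact Finset.image_subset_image (Finset.subset_univ u)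
    calc (17 : ℕ) ≤ 18 := by norm_num
    _ = (Y.image (Finset.image φ)).card := by
        rw [Finset.card_image_of_injective _ (Finset.image_injective hφ), hYcard]
    _ ≤ _ := Finset.card_le_card hsub

lemma sumA {n : ℕ} (E : Finset (Finset (Fin n))) :
    ((univ : Finset ((Fin n × Fin n) × Fin n)).filter (fun q => q.2 ∈ plink E q.1)).card
      = ∑ p : Fin n × Fin n, (plink E p).card := by
  classical
  rw [Finset.card_eq_sum_card_fiberwise (f := fun q => q.1) (t := univ) (fun q _ => mem_univ _)]
  refine Finset.sum_congr rfl (fun p _ => ?_)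
  have he : (univ.filter (fun q : (Fin n × Fin n) × Fin n => q.2 ∈ plink E q.1)).filter
      (fun q => q.1 = p) = (plink E p).image (fun w => (p, w)) := by
    ext q
    simp only [mem_filter, mem_univ, true_and, mem_image]
    constructor
    · rintro ⟨hq, rfl⟩
      exact ⟨q.2, hq, rfl⟩
    · rintro ⟨w, hw, rfl⟩
      exact ⟨hw, rfl⟩
  rw [he, Finset.card_image_of_injective _ (fun a b h => by simpa using h)]

lemma sumB {n : ℕ} (E : Finset (Finset (Fin n))) :
    ((univ : Finset ((Fin n × Fin n) × (Fin n × Fin n))).filter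
        (fun q => q.2 ∈ (plink E q.1).offDiag)).card
      = ∑ p : Fin n × Fin n, ((plink E p).offDiag).card := by
  classical
  rw [Finset.card_eq_sum_card_fiberwise (f := fun q => q.1) (t := univ) (fun q _ => mem_univ _)]
  refine Finset.sum_congr rfl (fun p _ => ?_)
  have he : (univ.filter (fun q : (Fin n × Fin n) × (Fin n × Fin n) =>
      q.2 ∈ (plink E q.1).offDiag)).filter (fun q => q.1 = p)
      = ((plink E p).offDiag).image (fun w => (p, w)) := by
    ext q
    simp only [mem_filter, mem_univ, true_and, mem_image]
    constructor
    · rintro ⟨hq, rfl⟩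
      exact ⟨q.2, hq, rfl⟩
    · rintro ⟨w, hw, rfl⟩
      exact ⟨hw, rfl⟩
  rw [he, Finset.card_image_of_injective _ (fun a b h => by simpa using h)]

lemma twoT {n : ℕ} (E : Finset (Finset (Fin n))) :
    2 * (E.filter (fun e => e.card = 3)).card ≤
    ((univ : Finset ((Fin n × Fin n) × Fin n)).filter (fun q => q.2 ∈ plink E q.1)).card := by
  classical
  set A := (univ : Finset ((Fin n × Fin n) × Fin n)).filter (fun q => q.2 ∈ plink E q.1) with hA
  set T := E.filter (fun e => e.card = 3) with hT
  have hmap : ∀ q ∈ A, ({q.1.1, q.1.2, q.2} : Finset (Fin n)) ∈ T := by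
    intro q hq
    have hq' := mem_filter.mp hq
    obtain ⟨h12, hw1, hw2, hmem⟩ := mem_plink.mp hq'.2
    refine mem_filter.mpr ⟨hmem, ?_⟩
    rw [Finset.card_eq_three]
    exact ⟨q.1.1, q.1.2, q.2, h12, Ne.symm hw1, Ne.symm hw2, rfl⟩
  rw [Finset.card_eq_sum_card_fiberwise hmap]
  calc 2 * T.card = ∑ _e ∈ T, 2 := by rw [Finset.sum_const, smul_eq_mul, mul_comm]
  _ ≤ _ := by
      refine Finset.sum_le_sum (fun e he => ?_)
      obtain ⟨hE3, hcard⟩ := mem_filter.mp he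
      obtain ⟨a, b, c, hab, hac, hbc, rfl⟩ := Finset.card_eq_three.mp hcard
      have h1 : ((a,b),c) ∈ A.filter (fun q => ({q.1.1, q.1.2, q.2} : Finset (Fin n)) = {a,b,c}) :=
        mem_filter.mpr ⟨mem_filter.mpr ⟨mem_univ _,
          mem_plink.mpr ⟨hab, Ne.symm hac, Ne.symm hbc, hE3⟩⟩, rfl⟩
      have hsw : ({b, a, c} : Finset (Fin n)) = {a, b, c} := Finset.insert_comm b a {c}
      have h2 : ((b,a),c) ∈ A.filter (fun q => ({q.1.1, q.1.2, q.2} : Finset (Fin n)) = {a,b,c}) :=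
        mem_filter.mpr ⟨mem_filter.mpr ⟨mem_univ _,
          mem_plink.mpr ⟨Ne.symm hab, Ne.symm hbc, Ne.symm hac, hsw ▸ hE3⟩⟩, hsw⟩
      calc (2:ℕ) = ({((a,b),c), ((b,a),c)} : Finset ((Fin n × Fin n) × Fin n)).card := by
            rw [Finset.card_pair (by simp [hab, Ne.symm hab])]
      _ ≤ _ := Finset.card_le_card (by
            intro q hq
            simp only [mem_insert, mem_singleton] at hq
            rcases hq with rfl | rfl
            · exact h1
            · exact h2)

lemma Bbound {n : ℕ} (E : Finset (Finset (Fin n))) (hE : IsComplex E)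
    (h17 : ∀ S : Finset (Fin n), S.card = 5 → (E.filter (fun e => e ⊆ S)).card ≤ 16) :
    ((univ : Finset ((Fin n × Fin n) × (Fin n × Fin n))).filter
        (fun q => q.2 ∈ (plink E q.1).offDiag)).card ≤ n ^ 3 := by
  classical
  have hinj : ((univ : Finset ((Fin n × Fin n) × (Fin n × Fin n))).filter
      (fun q => q.2 ∈ (plink E q.1).offDiag)).card ≤
      (univ : Finset (Fin n × Fin n × Fin n)).card := by
    apply Finset.card_le_card_of_injOn (fun q => (q.1.1, q.2.1, q.2.2)) (fun _ _ => mem_univ _)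
    intro q hq q' hq' heq
    simp only [coe_filter, Set.mem_setOf_eq, mem_univ, true_and] at hq hq'
    obtain ⟨hy, hz, hyz⟩ := Finset.mem_offDiag.mp hq
    obtain ⟨hy', hz', hyz'⟩ := Finset.mem_offDiag.mp hq'
    obtain ⟨hvx, hyv, hyx, hEy⟩ := mem_plink.mp hy
    obtain ⟨-, hzv, hzx, hEz⟩ := mem_plink.mp hz
    obtain ⟨hvx', hyv', hyx', hEy'⟩ := mem_plink.mp hy'
    obtain ⟨-, hzv', hzx', hEz'⟩ := mem_plink.mp hz'
    simp only [Prod.mk.injEq] at heq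
    obtain ⟨h11, h21, h22⟩ := heq
    by_cases hxx' : q.1.2 = q'.1.2
    · exact Prod.ext (Prod.ext h11 hxx') (Prod.ext h21 h22)
    · exfalso
      rw [← h11] at hvx' hyv' hEy' hzv' hEz'
      rw [← h21] at hyv' hyx' hEy'
      rw [← h22] at hzv' hzx' hEz'
      -- v := q.1.1, x := q.1.2, x' := q'.1.2, y := q.2.1, z := q.2.2
      obtain ⟨S, hS5, hS17⟩ := eighteen E hE q.1.1 q.1.2 q'.1.2 q.2.1 q.2.2
        hvx hvx' (Ne.symm hyv) (Ne.symm hzv)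
        hxx' (Ne.symm hyx) (Ne.symm hzx) (Ne.symm hyx') (Ne.symm hzx') hyz
        hEy hEz hEy' hEz'
      have := h17 S hS5
      omega
  calc _ ≤ _ := hinj
  _ = n ^ 3 := by simp [Finset.card_univ]; ring

lemma mainBound {n : ℕ} (hn : 5 ≤ n) (E : Finset (Finset (Fin n))) (hE : IsComplex E)
    (h17 : ∀ S : Finset (Fin n), S.card = 5 → (E.filter (fun e => e ⊆ S)).card ≤ 16) :
    (E.card : ℝ) ≤ ((n : ℝ) ^ ((5 : ℝ) / 2) + 3 * (n : ℝ) ^ 2) / 2 := by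
  classical
  have hn0 : (0:ℝ) < n := by positivity
  have hnR : (5:ℝ) ≤ (n:ℝ) := by exact_mod_cast hn
  set r : ℝ := Real.sqrt n with hr
  have hr0 : 0 ≤ r := Real.sqrt_nonneg _
  have hr2 : r ^ 2 = n := Real.sq_sqrt (le_of_lt hn0)
  have hrpow : (n:ℝ) ^ ((5:ℝ)/2) = (n:ℝ) ^ 2 * r := by
    have hr' : r = (n:ℝ) ^ ((1:ℝ)/2) := by rw [hr, Real.sqrt_eq_rpow]
    have : (n:ℝ) ^ ((5:ℝ)/2) = (n:ℝ) ^ ((2:ℝ) + 1/2) := by norm_num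
    rw [this, Real.rpow_add hn0, hr',
      show ((2:ℝ) = ((2:ℕ):ℝ)) by norm_num, Real.rpow_natCast]
  -- case on big edges
  by_cases hbig : ∃ e ∈ E, 4 ≤ e.card
  · obtain ⟨e, heE, he4⟩ := hbig
    obtain ⟨F, hFe, hF4⟩ := Finset.exists_subset_card_eq he4
    have hFE : F ∈ E := hE e heE F hFe
    by_cases hall : ∀ g ∈ E, g ⊆ F
    · have : E ⊆ F.powerset := fun g hg => Finset.mem_powerset.mpr (hall g hg)
      have hcard : E.card ≤ 16 := by
        calc E.card ≤ F.powerset.card := Finset.card_le_card this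
        _ = 2 ^ 4 := by rw [Finset.card_powerset, hF4]
        _ = 16 := by norm_num
      have hrn : (0:ℝ) ≤ (n:ℝ) ^ ((5:ℝ)/2) := Real.rpow_nonneg (le_of_lt hn0) _
      have : (E.card : ℝ) ≤ 16 := by exact_mod_cast hcard
      nlinarith
    · push_neg at hall
      obtain ⟨g, hgE, hgF⟩ := hall
      obtain ⟨w, hwg, hwF⟩ := Finset.not_subset.mp hgF
      have hwE : ({w} : Finset (Fin n)) ∈ E := hE g hgE {w} (Finset.singleton_subset_iff.mpr hwg)
      set S := insert w F with hS
      have hS5 : S.card = 5 := by rw [hS, Finset.card_insert_of_notMem hwF, hF4]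
      have hsub : insert ({w} : Finset (Fin n)) F.powerset ⊆ E.filter (fun e => e ⊆ S) := by
        intro u hu
        rcases Finset.mem_insert.mp hu with rfl | hu
        · exact mem_filter.mpr ⟨hwE, by simp [hS]⟩
        · have huF := Finset.mem_powerset.mp hu
          exact mem_filter.mpr ⟨hE F hFE u huF,
            huF.trans (Finset.subset_insert _ _)⟩
      have h17' : 17 ≤ (E.filter (fun e => e ⊆ S)).card := by
        calc 17 = (insert ({w} : Finset (Fin n)) F.powerset).card := by
              rw [Finset.card_insert_of_notMem (fun hmem =>
                hwF (Finset.singleton_subset_iff.mp (Finset.mem_powerset.mp hmem))),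
                Finset.card_powerset, hF4]
              norm_num
        _ ≤ _ := Finset.card_le_card hsub
      exact absurd (h17 S hS5) (by omega)
  · -- all edges have size ≤ 3
    push_neg at hbig
    have hsmall : ∀ e ∈ E, e.card ≤ 3 := fun e he => by have := hbig e he; omega
    set T := E.filter (fun e => e.card = 3) with hT
    set P := E.filter (fun e => ¬ e.card = 3) with hP
    have hsplit : T.card + P.card = E.card := Finset.card_filter_add_card_filter_not _
    -- bound on P
    have hPsub : P ⊆ (univ : Finset (Fin n)).powersetCard 0 ∪
        (univ : Finset (Fin n)).powersetCard 1 ∪ (univ : Finset (Fin n)).powersetCard 2 := by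
      intro u hu
      obtain ⟨huE, hu3⟩ := mem_filter.mp hu
      have : u.card = 0 ∨ u.card = 1 ∨ u.card = 2 := by have := hsmall u huE; omega
      simp only [Finset.mem_union, Finset.mem_powersetCard]
      rcases this with h | h | h
      · exact Or.inl (Or.inl ⟨Finset.subset_univ _, h⟩)
      · exact Or.inl (Or.inr ⟨Finset.subset_univ _, h⟩)
      · exact Or.inr ⟨Finset.subset_univ _, h⟩
    have hPcard : P.card ≤ 1 + n + n.choose 2 := by
      calc P.card ≤ _ := Finset.card_le_card hPsub
      _ ≤ ((univ : Finset (Fin n)).powersetCard 0 ∪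
            (univ : Finset (Fin n)).powersetCard 1).card +
            ((univ : Finset (Fin n)).powersetCard 2).card := Finset.card_union_le _ _
      _ ≤ ((univ : Finset (Fin n)).powersetCard 0).card +
            ((univ : Finset (Fin n)).powersetCard 1).card +
            ((univ : Finset (Fin n)).powersetCard 2).card := by
            have := Finset.card_union_le ((univ : Finset (Fin n)).powersetCard 0)
              ((univ : Finset (Fin n)).powersetCard 1)
            omega
      _ = 1 + n + n.choose 2 := by
            rw [Finset.card_powersetCard, Finset.card_powersetCard, Finset.card_powersetCard]
            simp [Finset.card_univ]
    have hchoose : ((n.choose 2 : ℕ) : ℝ) ≤ (n:ℝ)^2 / 2 := by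
      rw [Nat.choose_two_right]
      calc ((n * (n-1) / 2 : ℕ) : ℝ) ≤ ((n * (n-1) : ℕ) : ℝ) / ((2:ℕ):ℝ) := Nat.cast_div_le
      _ ≤ (n:ℝ)^2 / 2 := by
          push_cast
          have h1 : ((n-1 : ℕ):ℝ) ≤ (n:ℝ) := by
            have : (n-1 : ℕ) ≤ n := Nat.sub_le n 1
            exact_mod_cast this
          nlinarith
    -- bound on T via Cauchy-Schwarz
    have hsum1 : 2 * T.card ≤ ∑ p : Fin n × Fin n, (plink E p).card := by
      rw [← sumA E]; exact twoT E
    have hsum2 : ∑ p : Fin n × Fin n, ((plink E p).offDiag).card ≤ n ^ 3 := by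
      rw [← sumB E]; exact Bbound E hE h17
    set s : ℝ := ∑ p : Fin n × Fin n, ((plink E p).card : ℝ) with hs
    have hs0 : 0 ≤ s := Finset.sum_nonneg (fun p _ => by positivity)
    have hoffD : ∀ p : Fin n × Fin n, (((plink E p).offDiag).card : ℝ)
        = ((plink E p).card : ℝ)^2 - ((plink E p).card : ℝ) := by
      intro p
      rw [Finset.offDiag_card]
      have hle : (plink E p).card ≤ (plink E p).card * (plink E p).card := by
        rcases Nat.eq_zero_or_pos (plink E p).card with h | h
        · simp [h]
        · exact Nat.le_mul_of_pos_left _ h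
      rw [Nat.cast_sub hle]
      push_cast
      ring
    have hsumsq : ∑ p : Fin n × Fin n, ((plink E p).card : ℝ)^2 - s ≤ (n:ℝ)^3 := by
      have : ((∑ p : Fin n × Fin n, ((plink E p).offDiag).card : ℕ) : ℝ) ≤ ((n^3 : ℕ) : ℝ) :=
        by exact_mod_cast hsum2
      rw [Nat.cast_sum] at this
      push_cast at this
      calc ∑ p : Fin n × Fin n, ((plink E p).card : ℝ)^2 - s
          = ∑ p : Fin n × Fin n, (((plink E p).card : ℝ)^2 - ((plink E p).card : ℝ)) := by
            rw [Finset.sum_sub_distrib, hs]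
      _ = ∑ p : Fin n × Fin n, (((plink E p).offDiag).card : ℝ) := by
            exact Finset.sum_congr rfl (fun p _ => (hoffD p).symm)
      _ ≤ (n:ℝ)^3 := this
    have hCS : s^2 ≤ (n:ℝ)^2 * ∑ p : Fin n × Fin n, ((plink E p).card : ℝ)^2 := by
      have := sq_sum_le_card_mul_sum_sq
        (s := (univ : Finset (Fin n × Fin n))) (f := fun p => ((plink E p).card : ℝ))
      have hcard : ((univ : Finset (Fin n × Fin n)).card : ℝ) = (n:ℝ)^2 := by
        simp [Finset.card_univ]
        ring
      rw [hcard] at this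
      exact this
    have hskey : s ≤ (n:ℝ)^2 * r + (n:ℝ)^2 := by
      by_contra hcon
      push_neg at hcon
      have h1 : (n:ℝ)^2 * r + (n:ℝ)^2 ≤ s := le_of_lt hcon
      have h2 : (n:ℝ)^2 * r ≤ s - (n:ℝ)^2 := by linarith
      have h3 : (0:ℝ) ≤ (n:ℝ)^2 * r := by positivity
      have h4 : ((n:ℝ)^2 * r + (n:ℝ)^2) * ((n:ℝ)^2 * r) ≤ s * (s - (n:ℝ)^2) :=
        mul_le_mul h1 h2 h3 (le_trans (by positivity) h1)
      have h5 : s * (s - (n:ℝ)^2) ≤ (n:ℝ)^5 := by nlinarith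
      have hrpos : 0 < r := by rw [hr]; exact Real.sqrt_pos.mpr hn0
      have e2 : ((n:ℝ)^2*r+(n:ℝ)^2)*((n:ℝ)^2*r) = (n:ℝ)^4 * (r^2) + (n:ℝ)^4 * r := by ring
      rw [hr2] at e2
      have hpos : 0 < (n:ℝ)^4 * r := by positivity
      nlinarith [h4, h5, e2]
    have hTcard : (T.card : ℝ) ≤ s / 2 := by
      have : ((2 * T.card : ℕ) : ℝ) ≤ s := by
        rw [hs, ← Nat.cast_sum]
        exact_mod_cast hsum1
      push_cast at this
      linarith
    -- final assembly
    have hEcard : (E.card : ℝ) = (T.card : ℝ) + (P.card : ℝ) := by exact_mod_cast hsplit.symm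
    have hPreal : (P.card : ℝ) ≤ 1 + (n:ℝ) + (n:ℝ)^2/2 := by
      have : ((P.card : ℕ) : ℝ) ≤ ((1 + n + n.choose 2 : ℕ) : ℝ) := by exact_mod_cast hPcard
      push_cast at this
      linarith
    rw [hrpow, hEcard]
    nlinarith

lemma shrinkAux {α : Type*} [DecidableEq α] :
    ∀ (k : ℕ) (C : Finset (Finset α)), C.card = k → IsComplex C →
    ∀ m ≤ k, ∃ C' ⊆ C, IsComplex C' ∧ C'.card = m := by
  intro k
  induction k with
  | zero =>
    intro C hC _ m hm
    interval_cases m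
    exact ⟨C, Finset.Subset.refl C, by assumption, hC⟩
  | succ k ih =>
    intro C hC hcomp m hm
    rcases eq_or_lt_of_le hm with rfl | hmk
    · exact ⟨C, Finset.Subset.refl C, hcomp, hC⟩
    · have hne : C.Nonempty := Finset.card_pos.mp (by omega)
      obtain ⟨e, heC, hemax⟩ := Finset.exists_max_image C Finset.card hne
      have hcomp' : IsComplex (C.erase e) := by
        intro g hg f hf
        have hgC := Finset.mem_of_mem_erase hg
        have hfC : f ∈ C := hcomp g hgC f hf
        refine Finset.mem_erase.mpr ⟨?_, hfC⟩
        rintro rfl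
        exact (Finset.mem_erase.mp hg).1
          (Finset.eq_of_subset_of_card_le hf (hemax g hgC)).symm
      have hcard : (C.erase e).card = k := by
        rw [Finset.card_erase_of_mem heC, hC]
        omega
      obtain ⟨C', hsub, hC'comp, hC'card⟩ := ih (C.erase e) hcard hcomp' m (by omega)
      exact ⟨C', hsub.trans (Finset.erase_subset _ _), hC'comp, hC'card⟩

lemma shrink {α : Type*} [DecidableEq α] (C : Finset (Finset α)) (hC : IsComplex C)
    (m : ℕ) (hm : m ≤ C.card) : ∃ C' ⊆ C, IsComplex C' ∧ C'.card = m :=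
  shrinkAux C.card C rfl hC m hm

lemma buildCopy {n : ℕ} (E : Finset (Finset (Fin n))) (hE : IsComplex E)
    (S : Finset (Fin n)) (hS5 : S.card = 5)
    (h17 : 17 ≤ (E.filter (fun e => e ⊆ S)).card) :
    ∃ F : Finset (Finset (Fin 5)), IsComplex F ∧ F.card = 17 ∧ HasCopy F E := by
  classical
  set W := E.filter (fun e => e ⊆ S) with hW
  have hWcomp : IsComplex W := by
    intro e he f hf
    obtain ⟨heE, heS⟩ := mem_filter.mp he
    exact mem_filter.mpr ⟨hE e heE f hf, hf.trans heS⟩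
  obtain ⟨C, hCW, hCcomp, hCcard⟩ := shrink W hWcomp 17 h17
  have hCS : ∀ t ∈ C, t ⊆ S := fun t ht => (mem_filter.mp (hCW ht)).2
  have hCE : ∀ t ∈ C, t ∈ E := fun t ht => (mem_filter.mp (hCW ht)).1
  let e5 : (S : Finset (Fin n)) ≃ Fin 5 := S.equivFinOfCardEq hS5
  let f : Fin 5 → Fin n := fun i => (e5.symm i : Fin n)
  have hfinj : Function.Injective f := fun a b h =>
    e5.symm.injective (Subtype.val_injective h)
  let g : Fin n → Fin 5 := fun w => if h : w ∈ S then e5 ⟨w, h⟩ else 0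
  have hfS : ∀ i, f i ∈ S := fun i => (e5.symm i).2
  have hgf : ∀ i, g (f i) = i := by
    intro i
    simp only [g, f, dif_pos (e5.symm i).2, Subtype.coe_eta, Equiv.apply_symm_apply]
  have hfg : ∀ w ∈ S, f (g w) = w := by
    intro w hw
    simp only [g, f, dif_pos hw, Equiv.symm_apply_apply]
  have himgfg : ∀ t : Finset (Fin n), t ⊆ S → (t.image g).image f = t := by
    intro t ht
    rw [Finset.image_image]
    calc t.image (f ∘ g) = t.image id := Finset.image_congr (fun w hw => hfg w (ht hw))
    _ = t := Finset.image_id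
  have himggf : ∀ u : Finset (Fin 5), (u.image f).image g = u := by
    intro u
    rw [Finset.image_image]
    calc u.image (g ∘ f) = u.image id := Finset.image_congr (fun w _ => hgf w)
    _ = u := Finset.image_id
  refine ⟨C.image (Finset.image g), ?_, ?_, ?_⟩
  · -- IsComplex
    intro e' he' f' hf'
    obtain ⟨t, htC, rfl⟩ := Finset.mem_image.mp he'
    have htS := hCS t htC
    have hsub : f'.image f ⊆ t := by
      intro w hw
      obtain ⟨a, haf', rfl⟩ := Finset.mem_image.mp hw
      have := hf' haf'
      obtain ⟨u, hut, rfl⟩ := Finset.mem_image.mp this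
      rw [hfg u (htS hut)]
      exact hut
    have hmem : f'.image f ∈ C := hCcomp t htC _ hsub
    have : (f'.image f).image g = f' := himggf f'
    exact this ▸ Finset.mem_image_of_mem _ hmem
  · -- card
    rw [Finset.card_image_of_injOn, hCcard]
    intro t1 h1 t2 h2 heq
    have := congrArg (Finset.image f) heq
    rwa [himgfg t1 (hCS t1 h1), himgfg t2 (hCS t2 h2)] at this
  · -- HasCopy
    refine ⟨f, hfinj, ?_⟩
    intro e' he'
    obtain ⟨t, htC, rfl⟩ := Finset.mem_image.mp he'
    rw [himgfg t (hCS t htC)]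
    exact hCE t htC

theorem statement8 (n : ℕ) (hn : 5 ≤ n) :
    (∀ E : Finset (Finset (Fin n)), IsComplex E →
      (E.card : ℝ) > ((n : ℝ) ^ ((5 : ℝ) / 2) + 3 * (n : ℝ) ^ 2) / 2 →
      ∃ S : Finset (Fin n), S.card = 5 ∧ 17 ≤ (E.filter (fun e => e ⊆ S)).card) ∧
    (exF52 n : ℝ) ≤ ((n : ℝ) ^ ((5 : ℝ) / 2) + 3 * (n : ℝ) ^ 2) / 2 := by
  classical
  have part1 : ∀ E : Finset (Finset (Fin n)), IsComplex E →
      (E.card : ℝ) > ((n : ℝ) ^ ((5 : ℝ) / 2) + 3 * (n : ℝ) ^ 2) / 2 →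
      ∃ S : Finset (Fin n), S.card = 5 ∧ 17 ≤ (E.filter (fun e => e ⊆ S)).card := by
    intro E hE hcard
    by_contra hno
    push_neg at hno
    have h17 : ∀ S : Finset (Fin n), S.card = 5 → (E.filter (fun e => e ⊆ S)).card ≤ 16 := by
      intro S hS
      have := hno S hS
      omega
    exact absurd (mainBound hn E hE h17) (not_le.mpr hcard)
  refine ⟨part1, ?_⟩
  set Q : Set ℕ := {m | ∃ E : Finset (Finset (Fin n)), IsComplex E ∧
      (∀ S : Finset (Finset (Fin 5)), IsComplex S → S.card = 17 → ¬ HasCopy S E) ∧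
      E.card = m} with hQ
  have hQne : Q.Nonempty := by
    refine ⟨1, {∅}, ?_, ?_, by simp⟩
    · intro e he f hf
      simp only [Finset.mem_singleton] at he
      subst he
      simp [Finset.subset_empty.mp hf]
    · rintro S hScomp hScard ⟨f, hfinj, hfmap⟩
      have h2 : ∃ e ∈ S, e ≠ (∅ : Finset (Fin 5)) := by
        by_contra hc
        push_neg at hc
        have : S ⊆ {∅} := fun e he => Finset.mem_singleton.mpr (hc e he)
        have := Finset.card_le_card this
        simp [hScard] at this
      obtain ⟨e, heS, hene⟩ := h2
      have := hfmap e heS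
      simp only [Finset.mem_singleton] at this
      exact hene (Finset.image_eq_empty.mp this)
  have hQbdd : BddAbove Q := by
    refine ⟨2 ^ n, ?_⟩
    rintro m ⟨E, -, -, rfl⟩
    calc E.card ≤ (univ : Finset (Finset (Fin n))).card := Finset.card_le_univ E
    _ = 2 ^ n := by
        rw [Finset.card_univ]
        simp [Fintype.card_finset]
  have hmem : sSup Q ∈ Q := Nat.sSup_mem hQne hQbdd
  obtain ⟨E, hE, hnocopy, hEcard⟩ := hmem
  show ((sSup Q : ℕ) : ℝ) ≤ _
  by_contra hgt
  push_neg at hgt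
  rw [← hEcard] at hgt
  obtain ⟨S, hS5, h17⟩ := part1 E hE hgt
  obtain ⟨F, hFcomp, hFcard, hFcopy⟩ := buildCopy E hE S hS5 h17
  exact hnocopy F hFcomp hFcard hFcopy
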